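/- If the system (D,H,A) is output controllable (using unconstrained inputs), then for every λ ∈ ℂ the m×(N+L) complex block matrix A·[λI − D | H] has rank m. -/

import Mathlib

open Matrix

/-- `h` is `s`-sparse: at most `s` nonzero entries. -/
def IsSparse {L : ℕ} (s : ℕ) (h : Fin L → ℝ) : Prop :=
  {i : Fin L | h i ≠ 0}.ncard ≤ s

/-- Inputs `h 0, …, h (K-1)` steer the state `xinit` to `xfinal`:
`xfinal − D^K xinit = ∑_{k=1}^{K} D^{K−k} H h_k`. -/
def Steers {N L : ℕ} (D : Matrix (Fin N) (Fin N) ℝ) (H : Matrix (Fin N) (Fin L) ℝ)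
    (K : ℕ) (h : Fin K → Fin L → ℝ) (xinit xfinal : Fin N → ℝ) : Prop :=
  xfinal - (D ^ K) *ᵥ xinit = ∑ k : Fin K, (D ^ (K - 1 - (k : ℕ))) *ᵥ (H *ᵥ h k)

/-- The system `(D, H)` is `s`-sparse-controllable. -/
def SparseControllable (N L s : ℕ) (D : Matrix (Fin N) (Fin N) ℝ)
    (H : Matrix (Fin N) (Fin L) ℝ) : Prop :=
  ∀ xinit xfinal : Fin N → ℝ, ∃ K : ℕ, 0 < K ∧ ∃ h : Fin K → Fin L → ℝ,
    (∀ k, IsSparse s (h k)) ∧ Steers D H K h xinit xfinal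

/-- Output controllability with unconstrained inputs, for outputs `y_k = A x_k`. -/
def OutputControllable (N L m : ℕ) (D : Matrix (Fin N) (Fin N) ℝ)
    (H : Matrix (Fin N) (Fin L) ℝ) (A : Matrix (Fin m) (Fin N) ℝ) : Prop :=
  ∀ (x0 : Fin N → ℝ) (yfinal : Fin m → ℝ), ∃ K : ℕ, 0 < K ∧ ∃ h : Fin K → Fin L → ℝ,
    yfinal - A *ᵥ ((D ^ K) *ᵥ x0)
      = ∑ k : Fin K, A *ᵥ ((D ^ (K - 1 - (k : ℕ))) *ᵥ (H *ᵥ h k))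

/-- Output `s`-sparse-controllability for outputs `y_k = A x_k`. -/
def OutputSparseControllable (N L m s : ℕ) (D : Matrix (Fin N) (Fin N) ℝ)
    (H : Matrix (Fin N) (Fin L) ℝ) (A : Matrix (Fin m) (Fin N) ℝ) : Prop :=
  ∀ (x0 : Fin N → ℝ) (yfinal : Fin m → ℝ), ∃ K : ℕ, 0 < K ∧ ∃ h : Fin K → Fin L → ℝ,
    (∀ k, IsSparse s (h k)) ∧
    yfinal - A *ᵥ ((D ^ K) *ᵥ x0)
      = ∑ k : Fin K, A *ᵥ ((D ^ (K - 1 - (k : ℕ))) *ᵥ (H *ᵥ h k))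

/-- PBH block matrix `[λ I − D | H]` over `ℂ` (entrywise complexification). -/
noncomputable def pbhMatrix {N L : ℕ} (D : Matrix (Fin N) (Fin N) ℝ)
    (H : Matrix (Fin N) (Fin L) ℝ) (lam : ℂ) : Matrix (Fin N) (Fin N ⊕ Fin L) ℂ :=
  Matrix.fromCols (lam • (1 : Matrix (Fin N) (Fin N) ℂ) - D.map Complex.ofReal)
    (H.map Complex.ofReal)

/-- Necessary PBH-type condition for output controllability: if `(D,H,A)` is output
controllable then `A · [λI − D | H]` has rank `m` for every `λ ∈ ℂ`. -/
theorem output_controllable_pbh_necessary (N L m : ℕ) (hN : 0 < N) (hL : 0 < L) (hm : 0 < m)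
    (D : Matrix (Fin N) (Fin N) ℝ) (H : Matrix (Fin N) (Fin L) ℝ)
    (A : Matrix (Fin m) (Fin N) ℝ)
    (hctrl : OutputControllable N L m D H A) :
    ∀ lam : ℂ, (A.map Complex.ofReal * pbhMatrix D H lam).rank = m := by
  intro lam
  classical
  set A' := A.map Complex.ofReal with hA'
  set D' := D.map Complex.ofReal with hD'
  set H' := H.map Complex.ofReal with hH'
  have mpow : ∀ p : ℕ, (D ^ p).map Complex.ofReal = D' ^ p := by
    intro p
    have := map_pow (Complex.ofRealHom.mapMatrix
      (m := Fin N)) D p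
    exact this
  have cmapA : ∀ (u : Fin N → ℝ), (fun i => ((A *ᵥ u) i : ℂ)) = A' *ᵥ (fun j => (u j : ℂ)) := by
    intro u; funext i
    exact RingHom.map_mulVec Complex.ofRealHom A u i
  have cmapD : ∀ (p : ℕ) (u : Fin N → ℝ),
      (fun i => (((D ^ p) *ᵥ u) i : ℂ)) = D' ^ p *ᵥ (fun j => (u j : ℂ)) := by
    intro p u; funext i
    rw [← mpow]
    exact RingHom.map_mulVec Complex.ofRealHom (D ^ p) u i
  have cmapH : ∀ (u : Fin L → ℝ), (fun i => ((H *ᵥ u) i : ℂ)) = H' *ᵥ (fun j => (u j : ℂ)) := by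
    intro u; funext i
    exact RingHom.map_mulVec Complex.ofRealHom H u i
  -- It suffices to show the rows of the product are linearly independent.
  have key : ∀ z : Fin m → ℂ, z ᵥ* (A' * pbhMatrix D H lam) = 0 → z = 0 := by
    intro z hz
    rw [← Matrix.vecMul_vecMul] at hz
    set w := z ᵥ* A' with hw
    have hz' : Sum.elim (w ᵥ* (lam • (1 : Matrix (Fin N) (Fin N) ℂ) - D')) (w ᵥ* H') = 0 := by
      rw [← Matrix.vecMul_fromCols]; exact hz
    have h1 : w ᵥ* D' = lam • w := by
      have h0 : w ᵥ* (lam • (1 : Matrix (Fin N) (Fin N) ℂ) - D') = 0 := by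
        ext j; exact congr_fun hz' (Sum.inl j)
      have hsub : w ᵥ* (lam • (1 : Matrix (Fin N) (Fin N) ℂ)) - w ᵥ* D' = 0 := by
        rw [← Matrix.vecMul_sub]; exact h0
      have hsmul : w ᵥ* (lam • (1 : Matrix (Fin N) (Fin N) ℂ)) = lam • w := by
        ext j
        simp [Matrix.vecMul, dotProduct, Matrix.one_apply, mul_comm]
      rw [hsmul] at hsub
      exact (sub_eq_zero.mp hsub).symm
    have h2 : w ᵥ* H' = 0 := by
      ext j; exact congr_fun hz' (Sum.inr j)
    have hpow : ∀ n : ℕ, w ᵥ* D' ^ n = lam ^ n • w := by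
      intro n
      induction n with
      | zero => simp
      | succ n ih =>
        rw [pow_succ, ← Matrix.vecMul_vecMul, ih, Matrix.smul_vecMul, h1, smul_smul, pow_succ]
    have hdot : ∀ y : Fin m → ℝ, z ⬝ᵥ (fun i => (y i : ℂ)) = 0 := by
      intro y
      obtain ⟨K, hK, h, hsteer⟩ := hctrl 0 y
      have hy : y = ∑ k : Fin K, A *ᵥ ((D ^ (K - 1 - (k : ℕ))) *ᵥ (H *ᵥ h k)) := by
        simpa using hsteer
      have hyC : (fun i => (y i : ℂ)) = ∑ k : Fin K,
          A' *ᵥ (D' ^ (K - 1 - (k : ℕ)) *ᵥ (H' *ᵥ fun j => (h k j : ℂ))) := by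
        funext i
        rw [hy]
        rw [show ((∑ k : Fin K, A *ᵥ ((D ^ (K - 1 - (k : ℕ))) *ᵥ (H *ᵥ h k))) i : ℂ)
            = ∑ k : Fin K, (((A *ᵥ ((D ^ (K - 1 - (k : ℕ))) *ᵥ (H *ᵥ h k))) i : ℝ) : ℂ) by
          push_cast [Finset.sum_apply]; ring]
        rw [Finset.sum_apply]
        refine Finset.sum_congr rfl fun k _ => ?_
        rw [show (((A *ᵥ ((D ^ (K - 1 - (k : ℕ))) *ᵥ (H *ᵥ h k))) i : ℝ) : ℂ)
            = (fun i => (((A *ᵥ ((D ^ (K - 1 - (k : ℕ))) *ᵥ (H *ᵥ h k))) i : ℝ) : ℂ)) i from rfl]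
        rw [cmapA, cmapD, cmapH]
      rw [hyC]
      have hsplit : z ⬝ᵥ (∑ k : Fin K,
          A' *ᵥ (D' ^ (K - 1 - (k : ℕ)) *ᵥ (H' *ᵥ fun j => (h k j : ℂ))))
          = ∑ k : Fin K, z ⬝ᵥ (A' *ᵥ (D' ^ (K - 1 - (k : ℕ)) *ᵥ (H' *ᵥ fun j => (h k j : ℂ)))) := by
        simp only [dotProduct, Finset.sum_apply, Finset.mul_sum]
        exact Finset.sum_comm
      rw [hsplit]
      refine Finset.sum_eq_zero fun k _ => ?_
      rw [Matrix.dotProduct_mulVec, ← hw, Matrix.dotProduct_mulVec, hpow,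
        smul_dotProduct, Matrix.dotProduct_mulVec, h2, zero_dotProduct, smul_zero]
    ext i
    have := hdot (Pi.single i 1)
    simpa [dotProduct, Pi.single_apply, apply_ite Complex.ofReal, mul_ite,
      Finset.sum_ite_eq'] using this
  have hli : LinearIndependent ℂ (fun i => (A' * pbhMatrix D H lam) i) := by
    change LinearIndependent ℂ (A' * pbhMatrix D H lam).row
    rw [← Matrix.vecMul_injective_iff]
    intro x y hxy
    have hsub : (x - y) ᵥ* (A' * pbhMatrix D H lam) = 0 := by
      rw [Matrix.sub_vecMul]
      change x ᵥ* _ - y ᵥ* _ = 0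
      rw [show x ᵥ* (A' * pbhMatrix D H lam) = y ᵥ* (A' * pbhMatrix D H lam) from hxy, sub_self]
    exact sub_eq_zero.mp (key _ hsub)
  have := hli.rank_matrix
  simpa using this
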